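/- For 0 ≤ ε ≤ 1 and C ≥ 0, the operator D₀ + ((C − ε|p|)/2)(β+1) on L²(ℝ³, ℂ⁴) is invertible, and one has the operator bound (D₀ + ((C−ε|p|)/2)(β+1))^{-1} ≤ (1/2)[(α·p+β+i√C)^{-1} + (α·p+β−i√C)^{-1}] + 8ε(1+C)/|p|. -/

import Mathlib

open MeasureTheory Matrix

noncomputable section

/-- The three Pauli matrices. -/
def pauli : Fin 3 → Matrix (Fin 2) (Fin 2) ℂ :=
  ![!![0, 1; 1, 0], !![0, -Complex.I; Complex.I, 0], !![1, 0; 0, -1]]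

/-- The Dirac matrices `α_j` in the standard representation. -/
def diracAlpha (j : Fin 3) : Matrix (Fin 4) (Fin 4) ℂ :=
  Matrix.reindex finSumFinEquiv finSumFinEquiv
    (Matrix.fromBlocks (0 : Matrix (Fin 2) (Fin 2) ℂ) (pauli j) (pauli j) 0)

/-- The Dirac matrix `β` in the standard representation. -/
def diracBeta : Matrix (Fin 4) (Fin 4) ℂ :=
  Matrix.reindex finSumFinEquiv finSumFinEquiv
    (Matrix.fromBlocks (1 : Matrix (Fin 2) (Fin 2) ℂ) 0 0 (-1 : Matrix (Fin 2) (Fin 2) ℂ))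

/-- The Fourier symbol `α·p + β` of the free Dirac operator `D₀`. -/
def diracSymbol (p : EuclideanSpace ℝ (Fin 3)) : Matrix (Fin 4) (Fin 4) ℂ :=
  (∑ j : Fin 3, (p j : ℂ) • diracAlpha j) + diracBeta
open scoped ComplexOrder

/-- The Fourier symbol of `D₀ + ((C - ε|p|)/2)(β+1)`. -/
def shiftedSymbolEps (C ε : ℝ) (p : EuclideanSpace ℝ (Fin 3)) : Matrix (Fin 4) (Fin 4) ℂ :=
  diracSymbol p + (((C - ε * ‖p‖) / 2 : ℝ) : ℂ) • (diracBeta + 1)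

/-- The Fourier symbol of `(1/2)[(α·p+β+i√C)⁻¹ + (α·p+β−i√C)⁻¹]`. -/
def avgResolventSymbol (C : ℝ) (p : EuclideanSpace ℝ (Fin 3)) : Matrix (Fin 4) (Fin 4) ℂ :=
  (1 / 2 : ℂ) • ((diracSymbol p + (Complex.I * (Real.sqrt C : ℂ)) • 1)⁻¹ +
    (diracSymbol p - (Complex.I * (Real.sqrt C : ℂ)) • 1)⁻¹)

set_option maxHeartbeats 1000000

namespace SAux

open Complex

def NM (x y z a b : ℂ) : Matrix (Fin 4) (Fin 4) ℂ :=
  !![a+b, 0, z, x - I*y;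
     0, a+b, x + I*y, -z;
     z, x - I*y, b-a, 0;
     x + I*y, -z, 0, b-a]

lemma NM_mul (x y z a b b' : ℂ) :
    NM x y z a b * NM x y z a b' =
      NM ((b+b')*x) ((b+b')*y) ((b+b')*z) ((b+b')*a) (x^2+y^2+z^2+a^2+b*b') := by
  ext i j
  fin_cases i <;> fin_cases j <;>
    simp [NM, Matrix.mul_apply, Fin.sum_univ_four, Complex.I_sq] <;> ring_nf <;>
    simp [Complex.I_sq] <;> ring

lemma NM_add (x y z a b x' y' z' a' b' : ℂ) :
    NM x y z a b + NM x' y' z' a' b' = NM (x+x') (y+y') (z+z') (a+a') (b+b') := by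
  ext i j
  fin_cases i <;> fin_cases j <;> simp [NM, Matrix.vecHead, Matrix.vecTail, Function.comp] <;> ring

lemma NM_sub (x y z a b x' y' z' a' b' : ℂ) :
    NM x y z a b - NM x' y' z' a' b' = NM (x-x') (y-y') (z-z') (a-a') (b-b') := by
  ext i j
  fin_cases i <;> fin_cases j <;> simp [NM, Matrix.vecHead, Matrix.vecTail, Function.comp] <;> ring

lemma NM_smul (c x y z a b : ℂ) :
    c • NM x y z a b = NM (c*x) (c*y) (c*z) (c*a) (c*b) := by
  ext i j
  fin_cases i <;> fin_cases j <;> simp [NM, Matrix.vecHead, Matrix.vecTail, Function.comp] <;> ring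

lemma NM_one : NM 0 0 0 0 1 = 1 := by
  ext i j
  fin_cases i <;> fin_cases j <;>
    simp [NM, Matrix.one_apply, Matrix.vecHead, Matrix.vecTail, Function.comp]

lemma NM_smul_one (c : ℂ) : NM 0 0 0 0 c = c • 1 := by
  rw [← NM_one, NM_smul]; norm_num

lemma NM_zero : NM 0 0 0 0 0 = 0 := by
  ext i j
  fin_cases i <;> fin_cases j <;> simp [NM, Matrix.vecHead, Matrix.vecTail, Function.comp]

lemma NM_herm (x y z a b : ℝ) :
    (NM (x:ℂ) (y:ℂ) (z:ℂ) (a:ℂ) (b:ℂ)).IsHermitian := by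
  unfold Matrix.IsHermitian
  ext i j
  fin_cases i <;> fin_cases j <;>
    simp [NM, Matrix.conjTranspose_apply, Complex.ext_iff]

lemma rsmul_posSemidef {M : Matrix (Fin 4) (Fin 4) ℂ} (hM : M.PosSemidef) {c : ℝ}
    (hc : 0 ≤ c) : ((c:ℂ) • M).PosSemidef := by
  constructor
  · have h := hM.1
    unfold Matrix.IsHermitian at *
    rw [Matrix.conjTranspose_smul, h]
    congr 1
    exact Complex.conj_ofReal c
  · intro x
    have h2 := hM.2 x
    have hc' : (0:ℂ) ≤ (c:ℂ) := by exact_mod_cast hc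
    convert mul_nonneg hc' h2 using 1
    simp only [Finsupp.sum, Finset.mul_sum, Matrix.smul_apply, smul_eq_mul]
    refine Finset.sum_congr rfl fun i _ => Finset.sum_congr rfl fun j _ => ?_
    ring

lemma smul_one_posSemidef {c : ℝ} (hc : 0 ≤ c) :
    (((c:ℝ):ℂ) • (1 : Matrix (Fin 4) (Fin 4) ℂ)).PosSemidef :=
  rsmul_posSemidef Matrix.PosSemidef.one hc

lemma NM_posSemidef (x y z u v w : ℝ) (h0 : 0 ≤ w)
    (h1 : u^2*(x^2+y^2+z^2) + v^2 ≤ w^2) :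
    (NM ((u*x : ℝ):ℂ) ((u*y : ℝ):ℂ) ((u*z : ℝ):ℂ) ((v:ℝ):ℂ) ((w:ℝ):ℂ)).PosSemidef := by
  set m : ℝ := Real.sqrt (u^2*(x^2+y^2+z^2) + v^2) with hmdef
  have hsum : 0 ≤ u^2*(x^2+y^2+z^2) + v^2 := by positivity
  have hm0 : 0 ≤ m := Real.sqrt_nonneg _
  have hm2 : m^2 = u^2*(x^2+y^2+z^2) + v^2 := Real.sq_sqrt hsum
  have hmw : m ≤ w := by
    rw [← Real.sqrt_sq h0]
    exact Real.sqrt_le_sqrt h1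
  set P : Matrix (Fin 4) (Fin 4) ℂ :=
    NM ((u*x : ℝ):ℂ) ((u*y : ℝ):ℂ) ((u*z : ℝ):ℂ) ((v:ℝ):ℂ) ((m:ℝ):ℂ) with hPdef
  have hPherm : P.IsHermitian := NM_herm _ _ _ _ _
  have hsplit : NM ((u*x : ℝ):ℂ) ((u*y : ℝ):ℂ) ((u*z : ℝ):ℂ) ((v:ℝ):ℂ) ((w:ℝ):ℂ)
      = P + ((w - m : ℝ):ℂ) • 1 := by
    rw [← NM_smul_one, hPdef, NM_add]
    congr 1 <;> (try push_cast) <;> ring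
  rw [hsplit]
  refine Matrix.PosSemidef.add ?_ (smul_one_posSemidef (by linarith))
  rcases eq_or_lt_of_le hm0 with hm | hm
  · have hz : u^2*(x^2+y^2+z^2) + v^2 = 0 := by
      rw [← hm2, ← hm]; norm_num
    have hux : u*x = 0 := by nlinarith [sq_nonneg (u*x), sq_nonneg (u*y), sq_nonneg (u*z), sq_nonneg v]
    have huy : u*y = 0 := by nlinarith [sq_nonneg (u*x), sq_nonneg (u*y), sq_nonneg (u*z), sq_nonneg v]
    have huz : u*z = 0 := by nlinarith [sq_nonneg (u*x), sq_nonneg (u*y), sq_nonneg (u*z), sq_nonneg v]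
    have hv : v = 0 := by nlinarith [sq_nonneg (u*x), sq_nonneg (u*y), sq_nonneg (u*z), sq_nonneg v]
    have hP0 : P = 0 := by
      rw [hPdef, hux, huy, huz, hv, ← hm]
      push_cast
      exact NM_zero
    rw [hP0]; exact Matrix.PosSemidef.zero
  · have hP2 : P * P = ((2*m : ℝ):ℂ) • P := by
      have hre : (u*x)^2+(u*y)^2+(u*z)^2+v^2+m*m = 2*m*m := by linear_combination -hm2
      have hreC : ((u*x : ℝ):ℂ)^2+((u*y : ℝ):ℂ)^2+((u*z : ℝ):ℂ)^2+((v:ℝ):ℂ)^2+((m:ℝ):ℂ)*((m:ℝ):ℂ)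
          = 2*((m:ℝ):ℂ)*((m:ℝ):ℂ) := by exact_mod_cast congrArg (Complex.ofReal) hre
      rw [hPdef, NM_mul, NM_smul, hreC]
      congr 1 <;> (try push_cast) <;> ring
    have key : P = (((2*m)⁻¹ : ℝ):ℂ) • (Pᴴ * P) := by
      rw [hPherm.eq, hP2, smul_smul]
      norm_cast
      rw [inv_mul_cancel₀ (by positivity)]
      simp
    rw [key]
    exact rsmul_posSemidef (Matrix.posSemidef_conjTranspose_mul_self P) (by positivity)

lemma nonneg_of_mul_right (x q : ℝ) (hq : 0 < q) (h : 0 ≤ x*q) : 0 ≤ x := by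
  by_contra hx
  push_neg at hx
  have := mul_neg_of_neg_of_pos hx hq
  linarith

lemma scalar_core (C ε q t a b k r : ℝ) (hC : 0 ≤ C) (hε0 : 0 ≤ ε) (hε1 : ε ≤ 1)
    (hq : 0 < q) (htdef : t = q^2) (ha : 0 < a) (hb : 0 < b)
    (ea : a*(t+1+C) = 1) (eb : b*(t+1+C-ε*q) = 1)
    (hkdef : k = (C-ε*q)/2) (hrq : r*q = 8*ε*(1+C)) (hr0 : 0 ≤ r) :
    0 ≤ r + b*k ∧ (a-b)^2*t + (a - b*(1+k))^2 ≤ (r + b*k)^2 := by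
  have ht : 0 < t := by rw [htdef]; positivity
  have h2q : 2*q ≤ t+1 := by
    have := sq_nonneg (q-1)
    linarith [htdef.ge, htdef.le]
  have hεq : ε*q ≤ q := by
    have := mul_nonneg (by linarith : (0:ℝ) ≤ 1-ε) hq.le
    linarith
  have hd2' : (t+1)/2 + C ≤ t+1+C-ε*q := by linarith
  have hεC : 0 ≤ ε*C := mul_nonneg hε0 hC
  have haC : 0 ≤ a*C := mul_nonneg ha.le hC
  have hbC : 0 ≤ b*C := mul_nonneg hb.le hC
  have hat : a*(t+1) ≤ 1 := by linarith [ea, haC]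
  have hbt : b*(t+1) ≤ 2 := by
    have h1 := mul_le_mul_of_nonneg_left hd2' hb.le
    linarith [eb, hbC, h1]
  have hbq2 : b*q^2 ≤ 2 := by
    have e : b*q^2 = b*t := by rw [htdef]
    linarith [hbt, hb.le, e.le, e.ge]
  have hab0 : 0 ≤ a*b := mul_nonneg ha.le hb.le
  have habt : (a*b)*(t+1)^2 ≤ 2 := by
    have h1 : (a*(t+1))*(b*(t+1)) ≤ 1*2 :=
      mul_le_mul hat hbt (by positivity) (by norm_num)
    have h2 : (a*(t+1))*(b*(t+1)) = (a*b)*(t+1)^2 := by ring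
    linarith [h2.ge, h2.le]
  have hq2ab : q^2*(a*b) ≤ 1/2 := by
    have h4t : 4*t ≤ (t+1)^2 := by
      linarith [sq_nonneg (t-1)]
    have h5 : (a*b)*(4*t) ≤ (a*b)*(t+1)^2 := mul_le_mul_of_nonneg_left h4t hab0
    have e : q^2*(a*b) = t*(a*b) := by rw [htdef]
    linarith [h5, habt, e.le, e.ge]
  have hu : a - b = -(ε*q)*(a*b) := by linear_combination b*ea - a*eb
  have hu0 : a - b ≤ 0 := by
    rw [hu]
    have : 0 ≤ (ε*q)*(a*b) := by positivity
    linarith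
  have huq : (a-b)*q = -(ε*(q^2*(a*b))) := by rw [hu]; ring
  have hεhalf : ε*(q^2*(a*b)) ≤ ε*(1/2) := mul_le_mul_of_nonneg_left hq2ab hε0
  have hruq : 0 ≤ (r+(a-b))*q := by
    have expand : (r+(a-b))*q = r*q + (a-b)*q := by ring
    rw [expand, hrq, huq]
    linarith
  have hru : 0 ≤ r + (a-b) := nonneg_of_mul_right _ _ hq hruq
  have hk_low : -(ε*q/2) ≤ k := by rw [hkdef]; linarith
  have h7 : (ε/2)*(b*q^2) ≤ (ε/2)*2 := mul_le_mul_of_nonneg_left hbq2 (by positivity)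
  have goal1 : 0 ≤ r + b*k := by
    apply nonneg_of_mul_right _ q hq
    have hkq : (-(ε*q/2))*(b*q) ≤ k*(b*q) :=
      mul_le_mul_of_nonneg_right hk_low (by positivity)
    have expand : (r + b*k)*q = r*q + k*(b*q) := by ring
    rw [expand, hrq]
    linarith [hkq, h7, hεC, hε0]
  have s3 : (a*b)^2*(q^4*(1+t)) ≤ 4 := by
    have habt0 : 0 ≤ (a*b)*(t+1)^2 := by positivity
    have s0 : q^4*(1+t) ≤ ((t+1)^2)^2 := by
      have e : q^4 = t^2 := by rw [htdef]; ring
      rw [e]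
      linarith [pow_nonneg ht.le 3, pow_nonneg ht.le 4, sq_nonneg t, ht.le]
    have s1 : (a*b)^2*(q^4*(1+t)) ≤ (a*b)^2*((t+1)^2)^2 :=
      mul_le_mul_of_nonneg_left s0 (sq_nonneg _)
    have s2 : (a*b)^2*((t+1)^2)^2 ≤ 4 := by
      have e : (a*b)^2*((t+1)^2)^2 = ((a*b)*(t+1)^2)^2 := by ring
      rw [e]
      calc ((a*b)*(t+1)^2)^2 ≤ 2^2 := pow_le_pow_left₀ habt0 habt 2
        _ = 4 := by norm_num
    linarith
  have hC2 : 1 ≤ (1+C)^2 := by linarith [sq_nonneg C]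
  have hA : (a-b)^2*(1+t)*q^2 ≤ 4*ε^2*(1+C)^2 := by
    have he : (a-b)^2*(1+t)*q^2 = ε^2*((a*b)^2*(q^4*(1+t))) := by rw [hu]; ring
    rw [he]
    have p1 : ε^2*((a*b)^2*(q^4*(1+t))) ≤ ε^2*4 := mul_le_mul_of_nonneg_left s3 (sq_nonneg ε)
    have p2 : ε^2*1 ≤ ε^2*(1+C)^2 := mul_le_mul_of_nonneg_left hC2 (sq_nonneg ε)
    linarith
  have hB : -(32*ε^2*(1+C)^2) ≤ 2*(b*k)*(r+(a-b))*q^2 := by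
    rcases le_or_gt 0 k with hk | hk
    · have h8 : 0 ≤ 2*(b*k)*(r+(a-b))*q^2 :=
        mul_nonneg (mul_nonneg (mul_nonneg (by norm_num) (mul_nonneg hb.le hk)) hru)
          (sq_nonneg q)
      have h9 : 0 ≤ 32*(ε^2*(1+C)^2) := by positivity
      linarith
    · have hnk : 0 ≤ -k := by linarith
      have hbk : 0 ≤ b*(-k) := mul_nonneg hb.le hnk
      have h1 : b*(-k) ≤ b*(ε*q/2) := mul_le_mul_of_nonneg_left (by linarith) hb.le
      have e2 : 0 ≤ (r+(a-b))*q^2 := mul_nonneg hru (sq_nonneg q)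
      have e1 : (r+(a-b))*q^2 ≤ r*q^2 := mul_le_mul_of_nonneg_right (by linarith) (sq_nonneg q)
      have step : (b*(-k))*((r+(a-b))*q^2) ≤ (b*(ε*q/2))*(r*q^2) :=
        mul_le_mul h1 e1 e2 (by positivity)
      have e6 : 0 ≤ r*q := by rw [hrq]; positivity
      have e5 : ((ε/2)*(b*q^2))*(r*q) ≤ ((ε/2)*2)*(r*q) := mul_le_mul_of_nonneg_right h7 e6
      have e3 : (b*(ε*q/2))*(r*q^2) = ((ε/2)*(b*q^2))*(r*q) := by ring
      have e7 : ((ε/2)*2)*(r*q) = ε*(8*ε*(1+C)) := by rw [hrq]; ring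
      have final : (b*(-k))*((r+(a-b))*q^2) ≤ 8*ε^2*(1+C) := by
        have e8 : ε*(8*ε*(1+C)) = 8*ε^2*(1+C) := by ring
        linarith [step, e5, e3.le, e3.ge, e7.le]
      have hsign : 2*(b*k)*(r+(a-b))*q^2 = -(2*((b*(-k))*((r+(a-b))*q^2))) := by ring
      rw [hsign]
      have hCC : 8*ε^2*(1+C) ≤ 16*ε^2*(1+C)^2 := by
        have q1 : 0 ≤ ε^2 := sq_nonneg ε
        have q2 : 0 ≤ ε^2*C := mul_nonneg q1 hC
        have q3 : 0 ≤ (ε^2*C)*C := mul_nonneg q2 hC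
        linarith [q1, q2, q3]
      linarith
  have hr2q : r^2*q^2 = 64*ε^2*(1+C)^2 := by
    have h9 : r^2*q^2 = (r*q)^2 := by ring
    rw [h9, hrq]; ring
  have goal2 : (a-b)^2*t + ((a-b) - b*k)^2 ≤ (r + b*k)^2 := by
    have hexp : ((r + b*k)^2 - (a-b)^2*t - ((a-b) - b*k)^2)*q^2
        = r^2*q^2 - (a-b)^2*(1+t)*q^2 + 2*(b*k)*(r+(a-b))*q^2 := by rw [htdef]; ring
    have hkey : 0 ≤ ((r + b*k)^2 - (a-b)^2*t - ((a-b) - b*k)^2)*q^2 := by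
      rw [hexp]
      have hX : 0 ≤ ε^2*(1+C)^2 := by positivity
      linarith [hA, hB, hr2q.ge, hr2q.le]
    have hq2pos : (0:ℝ) < q^2 := by positivity
    have := nonneg_of_mul_right _ _ hq2pos hkey
    linarith
  refine ⟨goal1, ?_⟩
  have hv : a - b*(1+k) = (a-b) - b*k := by ring
  rw [hv]
  exact goal2

lemma scalar_ineq (C ε q : ℝ) (hC : 0 ≤ C) (hε0 : 0 ≤ ε) (hε1 : ε ≤ 1) (hq : 0 < q) :
    0 ≤ 8*ε*(1+C)/q + (q^2+1+C-ε*q)⁻¹*((C-ε*q)/2) ∧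
    ((q^2+1+C)⁻¹ - (q^2+1+C-ε*q)⁻¹)^2*q^2 +
      ((q^2+1+C)⁻¹ - (q^2+1+C-ε*q)⁻¹*(1+(C-ε*q)/2))^2 ≤
      (8*ε*(1+C)/q + (q^2+1+C-ε*q)⁻¹*((C-ε*q)/2))^2 := by
  have hd1 : 0 < q^2+1+C := by positivity
  have h2q : 2*q ≤ q^2+1 := by linarith [sq_nonneg (q-1)]
  have hεq : ε*q ≤ q := by
    have := mul_nonneg (by linarith : (0:ℝ) ≤ 1-ε) hq.le
    linarith
  have hd2 : 0 < q^2+1+C-ε*q := by linarith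
  exact scalar_core C ε q (q^2) _ _ _ _ hC hε0 hε1 hq rfl
    (by positivity) (by positivity)
    (inv_mul_cancel₀ hd1.ne') (inv_mul_cancel₀ hd2.ne')
    rfl (by field_simp) (by positivity)

-- bridge lemmas

lemma fsf0 : (finSumFinEquiv (m := 2) (n := 2)).symm 0 = Sum.inl 0 := by decide
lemma fsf1 : (finSumFinEquiv (m := 2) (n := 2)).symm 1 = Sum.inl 1 := by decide
lemma fsf2 : (finSumFinEquiv (m := 2) (n := 2)).symm 2 = Sum.inr 0 := by decide
lemma fsf3 : (finSumFinEquiv (m := 2) (n := 2)).symm 3 = Sum.inr 1 := by decide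

lemma beta_NM : diracBeta = NM 0 0 0 1 0 := by
  ext i j
  fin_cases i <;> fin_cases j <;>
    simp [NM, diracBeta, Matrix.reindex_apply, Matrix.submatrix_apply, fsf0, fsf1, fsf2, fsf3,
      Matrix.fromBlocks, Matrix.one_apply, Matrix.vecHead, Matrix.vecTail, Function.comp]

lemma alpha_NM (p : EuclideanSpace ℝ (Fin 3)) :
    (∑ j : Fin 3, (p j : ℂ) • diracAlpha j) = NM (p 0) (p 1) (p 2) 0 0 := by
  rw [Fin.sum_univ_three]
  ext i j
  fin_cases i <;> fin_cases j <;>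
    simp [NM, diracAlpha, pauli, Matrix.reindex_apply, Matrix.submatrix_apply, fsf0, fsf1,
      fsf2, fsf3, Matrix.fromBlocks, Matrix.vecHead, Matrix.vecTail, Function.comp] <;> ring

lemma diracSymbol_NM (p : EuclideanSpace ℝ (Fin 3)) :
    diracSymbol p = NM (p 0) (p 1) (p 2) 1 0 := by
  rw [diracSymbol, alpha_NM, beta_NM, NM_add]
  norm_num

lemma norm_sq3 (p : EuclideanSpace ℝ (Fin 3)) :
    (p 0)^2 + (p 1)^2 + (p 2)^2 = ‖p‖^2 := by
  rw [EuclideanSpace.norm_eq, Real.sq_sqrt (by positivity)]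
  rw [Fin.sum_univ_three]
  simp [Real.norm_eq_abs, sq_abs]

lemma NM_mul_inv (x y z a b d : ℂ) (hd : d ≠ 0) (h : x^2+y^2+z^2+a^2-b^2 = d) :
    NM x y z a b * (d⁻¹ • NM x y z a (-b)) = 1 := by
  rw [Matrix.mul_smul, NM_mul]
  have h2 : NM ((b+-b)*x) ((b+-b)*y) ((b+-b)*z) ((b+-b)*a) (x^2+y^2+z^2+a^2+b*(-b)) = d • 1 := by
    rw [← NM_smul_one, show (b+-b)*x = 0 from by ring, show (b+-b)*y = 0 from by ring,
      show (b+-b)*z = 0 from by ring, show (b+-b)*a = 0 from by ring,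
      show x^2+y^2+z^2+a^2+b*(-b) = d from by linear_combination h]
  rw [h2, smul_smul, inv_mul_cancel₀ hd, one_smul]

end SAux

open SAux Complex

/-- **Lemma 10.**  For `0 ≤ ε ≤ 1` and `C ≥ 0`, the operator `D₀ + ((C-ε|p|)/2)(β+1)` is
invertible and `(D₀ + ((C-ε|p|)/2)(β+1))⁻¹ ≤ (1/2)[(α·p+β+i√C)⁻¹ + (α·p+β−i√C)⁻¹]
+ 8ε(1+C)/|p|`, expressed through the Fourier symbols at every momentum `p`. -/
theorem stmt_13 (C ε : ℝ) (hC : 0 ≤ C) (hε0 : 0 ≤ ε) (hε1 : ε ≤ 1)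
    (p : EuclideanSpace ℝ (Fin 3)) :
    IsUnit (shiftedSymbolEps C ε p) ∧
      (p ≠ 0 →
        (avgResolventSymbol C p + ((8 * ε * (1 + C) / ‖p‖ : ℝ) : ℂ) • 1 -
          (shiftedSymbolEps C ε p)⁻¹).PosSemidef) := by
  have hnorm : (p 0)^2 + (p 1)^2 + (p 2)^2 = ‖p‖^2 := norm_sq3 p
  have hX : ((p 0 : ℝ):ℂ)^2+((p 1 : ℝ):ℂ)^2+((p 2 : ℝ):ℂ)^2 = ((‖p‖ : ℝ):ℂ)^2 := by
    exact_mod_cast congrArg Complex.ofReal hnorm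
  have h2q : 2*‖p‖ ≤ ‖p‖^2+1 := by linarith [sq_nonneg (‖p‖-1)]
  have hεq : ε*‖p‖ ≤ ‖p‖ := by
    have := mul_nonneg (by linarith : (0:ℝ) ≤ 1-ε) (norm_nonneg p)
    linarith
  have hd1 : 0 < ‖p‖^2+1+C := by positivity
  have hd2 : 0 < ‖p‖^2+1+C-ε*‖p‖ := by linarith
  -- shifted symbol in NM form
  have hshift : shiftedSymbolEps C ε p
      = NM (p 0) (p 1) (p 2) (1+(((C - ε*‖p‖)/2 : ℝ):ℂ)) (((C - ε*‖p‖)/2 : ℝ):ℂ) := by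
    rw [shiftedSymbolEps, diracSymbol_NM, beta_NM,
      show (1 : Matrix (Fin 4) (Fin 4) ℂ) = NM 0 0 0 0 1 from NM_one.symm,
      NM_add, NM_smul, NM_add]
    congr 1 <;> ring
  have hMR : shiftedSymbolEps C ε p *
      ((((‖p‖^2+1+C-ε*‖p‖ : ℝ):ℂ))⁻¹ •
        NM (p 0) (p 1) (p 2) (1+(((C - ε*‖p‖)/2 : ℝ):ℂ)) (-(((C - ε*‖p‖)/2 : ℝ):ℂ))) = 1 := by
    rw [hshift]
    apply NM_mul_inv
    · exact Complex.ofReal_ne_zero.mpr hd2.ne'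
    · push_cast
      linear_combination hX
  have hunit : IsUnit (shiftedSymbolEps C ε p) :=
    ⟨⟨_, _, hMR, (mul_eq_one_comm).mp hMR⟩, rfl⟩
  have hinv := Matrix.inv_eq_right_inv hMR
  refine ⟨hunit, fun hp => ?_⟩
  have hq : 0 < ‖p‖ := norm_pos_iff.mpr hp
  -- resolvent inverses
  have hsC : ((Real.sqrt C : ℝ):ℂ)^2 = ((C : ℝ):ℂ) := by
    exact_mod_cast congrArg Complex.ofReal (Real.sq_sqrt hC)
  have hd1C : (((‖p‖^2+1+C : ℝ)):ℂ) ≠ 0 := Complex.ofReal_ne_zero.mpr hd1.ne'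
  have harg : ((p 0 : ℝ):ℂ)^2+((p 1 : ℝ):ℂ)^2+((p 2 : ℝ):ℂ)^2 + 1^2
      - (Complex.I*((Real.sqrt C : ℝ):ℂ))^2 = (((‖p‖^2+1+C : ℝ)):ℂ) := by
    push_cast
    linear_combination hX + hsC + (-((Real.sqrt C : ℝ):ℂ)^2) * Complex.I_sq
  have e1 : diracSymbol p + (Complex.I * (Real.sqrt C : ℂ)) • 1
      = NM (p 0) (p 1) (p 2) 1 (Complex.I * ((Real.sqrt C : ℝ):ℂ)) := by
    rw [diracSymbol_NM, show (1 : Matrix (Fin 4) (Fin 4) ℂ) = NM 0 0 0 0 1 from NM_one.symm,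
      NM_smul, NM_add]
    congr 1 <;> ring
  have e2 : diracSymbol p - (Complex.I * (Real.sqrt C : ℂ)) • 1
      = NM (p 0) (p 1) (p 2) 1 (-(Complex.I * ((Real.sqrt C : ℝ):ℂ))) := by
    rw [diracSymbol_NM, show (1 : Matrix (Fin 4) (Fin 4) ℂ) = NM 0 0 0 0 1 from NM_one.symm,
      NM_smul, NM_sub]
    congr 1 <;> ring
  have h1 : (diracSymbol p + (Complex.I * (Real.sqrt C : ℂ)) • 1)⁻¹
      = (((‖p‖^2+1+C : ℝ)):ℂ)⁻¹ •
        NM (p 0) (p 1) (p 2) 1 (-(Complex.I * ((Real.sqrt C : ℝ):ℂ))) := by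
    apply Matrix.inv_eq_right_inv
    rw [e1]
    exact NM_mul_inv _ _ _ _ _ _ hd1C harg
  have h2 : (diracSymbol p - (Complex.I * (Real.sqrt C : ℂ)) • 1)⁻¹
      = (((‖p‖^2+1+C : ℝ)):ℂ)⁻¹ •
        NM (p 0) (p 1) (p 2) 1 (Complex.I * ((Real.sqrt C : ℝ):ℂ)) := by
    apply Matrix.inv_eq_right_inv
    rw [e2]
    have harg2 : ((p 0 : ℝ):ℂ)^2+((p 1 : ℝ):ℂ)^2+((p 2 : ℝ):ℂ)^2 + 1^2
        - (-(Complex.I*((Real.sqrt C : ℝ):ℂ)))^2 = (((‖p‖^2+1+C : ℝ)):ℂ) := by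
      linear_combination harg
    have := NM_mul_inv (p 0) (p 1) (p 2) 1 (-(Complex.I*((Real.sqrt C : ℝ):ℂ))) _ hd1C harg2
    rw [neg_neg] at this
    exact this
  -- final matrix identity
  have hfinal : avgResolventSymbol C p + ((8 * ε * (1 + C) / ‖p‖ : ℝ) : ℂ) • 1 -
        (shiftedSymbolEps C ε p)⁻¹
      = NM ((((‖p‖^2+1+C)⁻¹ - (‖p‖^2+1+C-ε*‖p‖)⁻¹)*(p 0) : ℝ):ℂ)
          ((((‖p‖^2+1+C)⁻¹ - (‖p‖^2+1+C-ε*‖p‖)⁻¹)*(p 1) : ℝ):ℂ)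
          ((((‖p‖^2+1+C)⁻¹ - (‖p‖^2+1+C-ε*‖p‖)⁻¹)*(p 2) : ℝ):ℂ)
          ((((‖p‖^2+1+C)⁻¹ - (‖p‖^2+1+C-ε*‖p‖)⁻¹*(1+(C-ε*‖p‖)/2)) : ℝ):ℂ)
          (((8*ε*(1+C)/‖p‖ + (‖p‖^2+1+C-ε*‖p‖)⁻¹*((C-ε*‖p‖)/2)) : ℝ):ℂ) := by
    rw [avgResolventSymbol, h1, h2, hinv, smul_add, smul_smul, smul_smul,
      show ((1:Matrix (Fin 4) (Fin 4) ℂ)) = NM 0 0 0 0 1 from NM_one.symm,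
      NM_smul, NM_smul, NM_smul, NM_smul, NM_add, NM_add, NM_sub]
    congr 1 <;> (try push_cast) <;> ring
  rw [hfinal]
  have hscal := scalar_ineq C ε ‖p‖ hC hε0 hε1 hq
  exact NM_posSemidef (p 0) (p 1) (p 2) _ _ _ hscal.1 (by rw [hnorm]; exact hscal.2)
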